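/- Let q1, q2, u1, u2 ∈ ℂ^× be generic and λ, ν partitions. Define the Nekrasov factor N_{λν}(Q; q1, q2) = ∏_{(i,j)∈λ} (1 - Q q2^{-ν_i + j} q1^{λ^t_j - i + 1}) · ∏_{(i,j)∈ν} (1 - Q q2^{λ_i - j + 1} q1^{-ν^t_j + i}), and the box contents χ^λ_{(i,j)} = u1 q1^{i-1} q2^{j-1} for (i,j) ∈ λ and χ^ν_{(i,j)} = u2 q1^{i-1} q2^{j-1} for (i,j) ∈ ν. Then N_{λν}(u1/u2; q1, q2) = ∏_{x∈λ, y∈ν} S(χ^λ_x / χ^ν_y) · ∏_{x∈λ} (1 - q1 q2 χ^λ_x / u2) · ∏_{y∈ν} (1 - u1/χ^ν_y), where S(z) = (1-q1 z)(1-q2 z)/((1-z)(1-q1 q2 z)). -/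

import Mathlib

/-- The transpose of a partition `lam` (1-indexed, supported on `[1,N]`):
`λᵗ_j = #{i : 1 ≤ i ≤ N, λ_i ≥ j}`. -/
def transposeFn (N : ℕ) (lam : ℕ → ℕ) : ℕ → ℕ := fun j =>
  ((Finset.Icc 1 N).filter fun i => j ≤ lam i).card

/-- The Nekrasov factor
`N_{λν}(Q;q1,q2) = ∏_{(i,j)∈λ} (1 - Q q2^{-ν_i+j} q1^{λᵗ_j-i+1})
                 · ∏_{(i,j)∈ν} (1 - Q q2^{λ_i-j+1} q1^{-νᵗ_j+i})`,
for partitions `lam`, `nu` supported on `[1,Nl]`, `[1,Nn]` respectively. -/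
noncomputable def nek (Q q1 q2 : ℂ) (Nl Nn : ℕ) (lam nu : ℕ → ℕ) : ℂ :=
  (∏ i ∈ Finset.Icc 1 Nl, ∏ j ∈ Finset.Icc 1 (lam i),
      (1 - Q * q2 ^ ((j : ℤ) - (nu i : ℤ))
             * q1 ^ ((transposeFn Nl lam j : ℤ) - (i : ℤ) + 1)))
  * (∏ i ∈ Finset.Icc 1 Nn, ∏ j ∈ Finset.Icc 1 (nu i),
      (1 - Q * q2 ^ ((lam i : ℤ) - (j : ℤ) + 1)
             * q1 ^ ((i : ℤ) - (transposeFn Nn nu j : ℤ))))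

namespace Stmt16

open Finset

def sg (a b : ℤ) : Multiset (ℤ × ℤ) := {(a, b)}

lemma sg_congr {a a' b b' : ℤ} (ha : a = a') (hb : b = b') : sg a b = sg a' b' := by rw [ha, hb]

section Monoid
variable {M : Type} [AddCommMonoid M]

lemma shiftZ (g : ℤ → M) (n : ℕ) :
    (∑ l ∈ Icc 1 n, g ((l : ℤ) - 1)) + g (n : ℤ) = (∑ l ∈ Icc 1 n, g (l : ℤ)) + g 0 := by
  induction n with
  | zero => simp
  | succ n ih =>
      rw [Finset.sum_Icc_succ_top (by omega : 1 ≤ n + 1),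
          Finset.sum_Icc_succ_top (by omega : 1 ≤ n + 1)]
      have h1 : ((n + 1 : ℕ) : ℤ) - 1 = (n : ℤ) := by push_cast; ring
      rw [h1]
      calc (∑ l ∈ Icc 1 n, g ((l : ℤ) - 1)) + g (n : ℤ) + g ((n + 1 : ℕ) : ℤ)
          = ((∑ l ∈ Icc 1 n, g (l : ℤ)) + g 0) + g ((n + 1 : ℕ) : ℤ) := by rw [ih]
        _ = (∑ l ∈ Icc 1 n, g (l : ℤ)) + g ((n + 1 : ℕ) : ℤ) + g 0 := by abel

lemma reflectZ (g : ℤ → M) (n : ℕ) :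
    ∑ k ∈ Icc 1 n, g (k : ℤ) = ∑ k ∈ Icc 1 n, g ((n : ℤ) + 1 - k) := by
  apply Finset.sum_nbij' (fun k => n + 1 - k) (fun k => n + 1 - k)
  · intro a ha; simp only [mem_Icc] at *; omega
  · intro a ha; simp only [mem_Icc] at *; omega
  · intro a ha; simp only [mem_Icc] at ha; omega
  · intro a ha; simp only [mem_Icc] at ha; omega
  · intro a ha; simp only [mem_Icc] at ha
    congr 1; push_cast [Nat.cast_sub (by omega : a ≤ n + 1)]; ring

end Monoid

lemma tr_le (N : ℕ) (lam : ℕ → ℕ) (j : ℕ) : transposeFn N lam j ≤ N := by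
  have := Finset.card_filter_le (Icc 1 N) (fun i => j ≤ lam i)
  simpa [transposeFn] using this

lemma tr_filter_eq (N : ℕ) (lam : ℕ → ℕ) (hlam : ∀ i j : ℕ, i ≤ j → lam j ≤ lam i) (j : ℕ) :
    ((Icc 1 N).filter fun i => j ≤ lam i) = Icc 1 (transposeFn N lam j) := by
  set F := (Icc 1 N).filter fun i => j ≤ lam i with hF
  have key : ∀ x ∈ F, Icc 1 x ⊆ F := by
    intro x hx y hy
    simp only [hF, mem_filter, mem_Icc] at *
    exact ⟨⟨hy.1, le_trans hy.2 hx.1.2⟩, le_trans hx.2 (hlam y x hy.2)⟩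
  have hcard : transposeFn N lam j = F.card := rfl
  ext x
  simp only [mem_Icc, hcard]
  constructor
  · intro hx
    have h1 : 1 ≤ x := by
      have := hx; simp only [hF, mem_filter, mem_Icc] at this; exact this.1.1
    refine ⟨h1, ?_⟩
    have : (Icc 1 x).card ≤ F.card := Finset.card_le_card (key x hx)
    simpa using this
  · rintro ⟨h1, h2⟩
    by_contra hx
    have hsub : F ⊆ Icc 1 (x - 1) := by
      intro y hy
      have hy1 : 1 ≤ y := by
        have := hy; simp only [hF, mem_filter, mem_Icc] at this; exact this.1.1
      simp only [mem_Icc]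
      refine ⟨hy1, ?_⟩
      by_contra hyx
      exact hx (key y hy (by simp only [mem_Icc]; omega))
    have := Finset.card_le_card hsub
    simp only [Nat.card_Icc] at this
    omega

lemma le_tr_iff (N : ℕ) (lam : ℕ → ℕ) (hlam : ∀ i j : ℕ, i ≤ j → lam j ≤ lam i)
    {i : ℕ} (h1 : 1 ≤ i) (h2 : i ≤ N) (j : ℕ) :
    j ≤ lam i ↔ i ≤ transposeFn N lam j := by
  constructor
  · intro h
    have : i ∈ (Icc 1 N).filter fun i => j ≤ lam i := by simp [mem_filter, mem_Icc, h1, h2, h]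
    rw [tr_filter_eq N lam hlam j] at this
    simp only [mem_Icc] at this
    exact this.2
  · intro h
    have : i ∈ Icc 1 (transposeFn N lam j) := by simp [mem_Icc, h1, h]
    rw [← tr_filter_eq N lam hlam j] at this
    simp only [mem_filter] at this
    exact this.2

lemma tr_cutoff (N K : ℕ) (lam : ℕ → ℕ) (hN : ∀ i, N < i → lam i = 0) (hNK : N ≤ K)
    {j : ℕ} (hj : 1 ≤ j) : transposeFn K lam j = transposeFn N lam j := by
  unfold transposeFn
  congr 1
  ext i
  simp only [mem_filter, mem_Icc]
  constructor
  · rintro ⟨⟨hi1, hi2⟩, hl⟩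
    refine ⟨⟨hi1, ?_⟩, hl⟩
    by_contra h
    have := hN i (by omega)
    omega
  · rintro ⟨⟨hi1, hi2⟩, hl⟩
    exact ⟨⟨hi1, le_trans hi2 hNK⟩, hl⟩

lemma tr_congr (N : ℕ) (lam nu : ℕ → ℕ) (h : ∀ i, 1 ≤ i → i ≤ N → lam i = nu i) (j : ℕ) :
    transposeFn N lam j = transposeFn N nu j := by
  unfold transposeFn
  congr 1
  apply Finset.filter_congr
  intro i hi
  simp only [mem_Icc] at hi
  rw [h i hi.1 hi.2]

lemma FT {M : Type} [AddCommMonoid M] (Nn L : ℕ) (nu : ℕ → ℕ)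
    (hnu : ∀ i j : ℕ, i ≤ j → nu j ≤ nu i) (hL : nu 1 ≤ L) (e : ℕ → ℕ → M) :
    ∑ k ∈ Icc 1 Nn, ∑ l ∈ Icc 1 (nu k), e k l
      = ∑ l ∈ Icc 1 L, ∑ k ∈ Icc 1 (transposeFn Nn nu l), e k l := by
  have step1 : ∀ k ∈ Icc 1 Nn, ∑ l ∈ Icc 1 (nu k), e k l
      = ∑ l ∈ Icc 1 L, if l ≤ nu k then e k l else 0 := by
    intro k hk
    simp only [mem_Icc] at hk
    rw [← Finset.sum_filter]
    congr 1
    ext l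
    simp only [mem_filter, mem_Icc]
    have : nu k ≤ nu 1 := hnu 1 k hk.1
    omega
  rw [Finset.sum_congr rfl step1, Finset.sum_comm]
  apply Finset.sum_congr rfl
  intro l _
  rw [← Finset.sum_filter, tr_filter_eq Nn nu hnu l]

end Stmt16

namespace Stmt16
open Finset

lemma Sh (a c : ℤ) (n : ℕ) :
    (∑ l ∈ Icc 1 n, sg a (c - l + 1)) + sg a (c - n)
      = (∑ l ∈ Icc 1 n, sg a (c - l)) + sg a c := by
  have h := shiftZ (M := Multiset (ℤ × ℤ)) (fun x => sg a (c - x)) n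
  have e1 : ∀ l ∈ Icc 1 n, sg a (c - ((l : ℤ) - 1)) = sg a (c - l + 1) :=
    fun l _ => sg_congr rfl (by ring)
  rw [Finset.sum_congr rfl e1] at h
  simpa using h

lemma step4 {M : Type} [AddCancelCommMonoid M]
    (P1 P0 Q1 Q0 W1 W0 T0K T1K s0 d0 d1 uc0 uc1 : M)
    (IH : Q1 + W1 + s0 + T0K = Q0 + W0 + T1K + uc0)
    (Sh1 : P1 + d0 = P0 + uc1)
    (Sh2 : Q1 + d1 = Q0 + uc0) :
    P1 + W1 + s0 + (T0K + d0) = P0 + W0 + (T1K + d1) + uc1 := by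
  have h : (P1 + W1 + s0 + (T0K + d0)) + (Q1 + d1)
      = (P0 + W0 + (T1K + d1) + uc1) + (Q1 + d1) := by
    calc (P1 + W1 + s0 + (T0K + d0)) + (Q1 + d1)
        = (P1 + d0) + (Q1 + W1 + s0 + T0K) + d1 := by abel
      _ = (P0 + uc1) + (Q0 + W0 + T1K + uc0) + d1 := by rw [Sh1, IH]
      _ = (P0 + W0 + (T1K + d1) + uc1) + (Q0 + uc0) := by abel
      _ = (P0 + W0 + (T1K + d1) + uc1) + (Q1 + d1) := by rw [Sh2]
  exact add_right_cancel h

lemma delta4 (K : ℕ) : ∀ (nu : ℕ → ℕ), (∀ i j : ℕ, i ≤ j → nu j ≤ nu i) →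
    (∀ k, K < k → nu k = 0) →
    ∀ (r : ℕ) (c : ℤ), 1 ≤ r → r ≤ K →
    (∑ l ∈ Icc 1 (nu r), sg ((r : ℤ) - transposeFn K nu l) (c - l + 1)) + sg 0 (c - nu r)
      + (∑ k ∈ Icc (r+1) K, sg ((r : ℤ) - k) (c - nu k))
    = (∑ l ∈ Icc 1 (nu r), sg ((r : ℤ) - transposeFn K nu l) (c - l))
      + (∑ k ∈ Icc (r+1) K, sg ((r : ℤ) - k + 1) (c - nu k)) + sg ((r : ℤ) - K) c := by
  induction K with
  | zero => intro nu _ _ r c hr hrK; omega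
  | succ K ih =>
    intro nu hnu hsupp r c hr hrK
    by_cases hreq : r = K + 1
    · -- base situation : r = K+1
      subst hreq
      have htr : ∀ l ∈ Icc 1 (nu (K+1)), transposeFn (K+1) nu l = K + 1 := by
        intro l hl
        simp only [mem_Icc] at hl
        unfold transposeFn
        rw [Finset.filter_true_of_mem, Nat.card_Icc]
        · omega
        · intro i hi
          simp only [mem_Icc] at hi
          exact le_trans hl.2 (hnu i (K+1) hi.2)
      have e1 : ∀ l ∈ Icc 1 (nu (K+1)),
          sg (((K+1:ℕ) : ℤ) - transposeFn (K+1) nu l) (c - l + 1) = sg 0 (c - l + 1) := by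
        intro l hl; exact sg_congr (by rw [htr l hl]; push_cast; ring) rfl
      have e2 : ∀ l ∈ Icc 1 (nu (K+1)),
          sg (((K+1:ℕ) : ℤ) - transposeFn (K+1) nu l) (c - l) = sg 0 (c - l) := by
        intro l hl; exact sg_congr (by rw [htr l hl]; push_cast; ring) rfl
      rw [Finset.sum_congr rfl e1, Finset.sum_congr rfl e2,
          show (Icc (K+1+1) (K+1) : Finset ℕ) = ∅ from Finset.Icc_eq_empty (by omega)]
      simp only [Finset.sum_empty, add_zero]
      have := Sh 0 c (nu (K+1))
      rw [this]
      exact congrArg _ (sg_congr (by push_cast; ring) rfl)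
    · -- inductive situation : r ≤ K
      have hrK' : r ≤ K := by omega
      set g0 := nu (K+1) with hg0
      have hg0r : g0 ≤ nu r := hnu r (K+1) (by omega)
      set nu' : ℕ → ℕ := Function.update nu (K+1) 0 with hnu'def
      have hnu'eq : ∀ i, i ≠ K + 1 → nu' i = nu i := by
        intro i hi; simp [hnu'def, Function.update_apply, hi]
      have hnu'K1 : nu' (K+1) = 0 := by simp [hnu'def]
      have hnu' : ∀ i j : ℕ, i ≤ j → nu' j ≤ nu' i := by
        intro i j hij
        rcases eq_or_ne j (K+1) with hj | hj
        · subst hj; rw [hnu'K1]; omega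
        · rw [hnu'eq j hj]
          rcases eq_or_ne i (K+1) with hi | hi
          · subst hi; rw [hnu'K1]
            have : nu j = 0 := hsupp j (by omega)
            omega
          · rw [hnu'eq i hi]; exact hnu i j hij
      have hsupp' : ∀ k, K < k → nu' k = 0 := by
        intro k hk
        rcases eq_or_ne k (K+1) with h | h
        · subst h; exact hnu'K1
        · rw [hnu'eq k h]; exact hsupp k (by omega)
      have IH0 := ih nu' hnu' hsupp' r c hr hrK'
      -- rewrite nu' to nu inside IH0
      have htr' : ∀ l, transposeFn K nu' l = transposeFn K nu l := by
        intro l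
        apply tr_congr
        intro i _ hi2
        exact hnu'eq i (by omega)
      have hnu'r : nu' r = nu r := hnu'eq r (by omega)
      have hnu'k : ∀ k ∈ Icc (r+1) K, nu' k = nu k := by
        intro k hk; simp only [mem_Icc] at hk; exact hnu'eq k (by omega)
      rw [hnu'r] at IH0
      rw [Finset.sum_congr rfl (fun l _ => by rw [htr' l] :
            ∀ l ∈ Icc 1 (nu r), sg ((r : ℤ) - transposeFn K nu' l) (c - l + 1)
              = sg ((r : ℤ) - transposeFn K nu l) (c - l + 1))] at IH0
      rw [Finset.sum_congr rfl (fun l _ => by rw [htr' l] :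
            ∀ l ∈ Icc 1 (nu r), sg ((r : ℤ) - transposeFn K nu' l) (c - l)
              = sg ((r : ℤ) - transposeFn K nu l) (c - l))] at IH0
      rw [Finset.sum_congr rfl (fun k hk => by rw [hnu'k k hk] :
            ∀ k ∈ Icc (r+1) K, sg ((r : ℤ) - k) (c - nu' k) = sg ((r : ℤ) - k) (c - nu k))] at IH0
      rw [Finset.sum_congr rfl (fun k hk => by rw [hnu'k k hk] :
            ∀ k ∈ Icc (r+1) K, sg ((r : ℤ) - k + 1) (c - nu' k)
              = sg ((r : ℤ) - k + 1) (c - nu k))] at IH0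
      -- transpose facts
      have trf1 : ∀ l, 1 ≤ l → l ≤ g0 → transposeFn (K+1) nu l = K + 1 := by
        intro l hl1 hl2
        unfold transposeFn
        rw [Finset.filter_true_of_mem, Nat.card_Icc]
        · omega
        · intro i hi
          simp only [mem_Icc] at hi
          exact le_trans hl2 (hnu i (K+1) hi.2)
      have trf2 : ∀ l, 1 ≤ l → l ≤ g0 → transposeFn K nu l = K := by
        intro l hl1 hl2
        unfold transposeFn
        rw [Finset.filter_true_of_mem, Nat.card_Icc]
        · omega
        · intro i hi
          simp only [mem_Icc] at hi
          exact le_trans hl2 (le_trans (hnu i (K+1) (by omega)) le_rfl)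
      have trf3 : ∀ l, g0 < l → transposeFn (K+1) nu l = transposeFn K nu l := by
        intro l hl
        unfold transposeFn
        congr 1
        ext i
        simp only [mem_filter, mem_Icc]
        constructor
        · rintro ⟨⟨hh1, hh2⟩, hh3⟩
          refine ⟨⟨hh1, ?_⟩, hh3⟩
          by_contra hcon
          have hik : i = K + 1 := by omega
          subst hik
          have hcg : l ≤ g0 := by rw [hg0]; exact hh3
          omega
        · rintro ⟨⟨hh1, hh2⟩, hh3⟩; exact ⟨⟨hh1, by omega⟩, hh3⟩
      -- split the l-sums
      have split1 : ∀ (f : ℕ → Multiset (ℤ × ℤ)),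
          ∑ l ∈ Icc 1 (nu r), f l = ∑ l ∈ Icc 1 g0, f l + ∑ l ∈ Icc (g0+1) (nu r), f l := by
        intro f
        rw [show (Icc 1 (nu r) : Finset ℕ) = Ioc 0 (nu r) from by rw [← Finset.Icc_add_one_left_eq_Ioc]; rfl,
            show (Icc 1 g0 : Finset ℕ) = Ioc 0 g0 from by rw [← Finset.Icc_add_one_left_eq_Ioc]; rfl,
            show (Icc (g0+1) (nu r) : Finset ℕ) = Ioc g0 (nu r) from by rw [← Finset.Icc_add_one_left_eq_Ioc]]
        exact (Finset.sum_Ioc_consecutive _ (by omega) hg0r).symm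
      rw [split1 (fun l => sg ((r : ℤ) - transposeFn (K+1) nu l) (c - l + 1)),
          split1 (fun l => sg ((r : ℤ) - transposeFn (K+1) nu l) (c - l)),
          Finset.sum_Icc_succ_top (by omega : r + 1 ≤ K + 1)
            (fun k => sg ((r : ℤ) - k) (c - nu k)),
          Finset.sum_Icc_succ_top (by omega : r + 1 ≤ K + 1)
            (fun k => sg ((r : ℤ) - k + 1) (c - nu k))]
      rw [split1 (fun l => sg ((r : ℤ) - transposeFn K nu l) (c - l + 1)),
          split1 (fun l => sg ((r : ℤ) - transposeFn K nu l) (c - l))] at IH0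
      -- normalize the pieces
      have eA1 : ∀ l ∈ Icc 1 g0,
          sg ((r : ℤ) - transposeFn (K+1) nu l) (c - l + 1) = sg ((r : ℤ) - K - 1) (c - l + 1) := by
        intro l hl; simp only [mem_Icc] at hl
        exact sg_congr (by rw [trf1 l hl.1 hl.2]; push_cast; ring) rfl
      have eA0 : ∀ l ∈ Icc 1 g0,
          sg ((r : ℤ) - transposeFn (K+1) nu l) (c - l) = sg ((r : ℤ) - K - 1) (c - l) := by
        intro l hl; simp only [mem_Icc] at hl
        exact sg_congr (by rw [trf1 l hl.1 hl.2]; push_cast; ring) rfl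
      have eW1 : ∀ l ∈ Icc (g0+1) (nu r),
          sg ((r : ℤ) - transposeFn (K+1) nu l) (c - l + 1)
            = sg ((r : ℤ) - transposeFn K nu l) (c - l + 1) := by
        intro l hl; simp only [mem_Icc] at hl
        exact sg_congr (by rw [trf3 l (by omega)]) rfl
      have eW0 : ∀ l ∈ Icc (g0+1) (nu r),
          sg ((r : ℤ) - transposeFn (K+1) nu l) (c - l)
            = sg ((r : ℤ) - transposeFn K nu l) (c - l) := by
        intro l hl; simp only [mem_Icc] at hl
        exact sg_congr (by rw [trf3 l (by omega)]) rfl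
      have eQ1 : ∀ l ∈ Icc 1 g0,
          sg ((r : ℤ) - transposeFn K nu l) (c - l + 1) = sg ((r : ℤ) - K) (c - l + 1) := by
        intro l hl; simp only [mem_Icc] at hl
        exact sg_congr (by rw [trf2 l hl.1 hl.2]) rfl
      have eQ0 : ∀ l ∈ Icc 1 g0,
          sg ((r : ℤ) - transposeFn K nu l) (c - l) = sg ((r : ℤ) - K) (c - l) := by
        intro l hl; simp only [mem_Icc] at hl
        exact sg_congr (by rw [trf2 l hl.1 hl.2]) rfl
      rw [Finset.sum_congr rfl eA1, Finset.sum_congr rfl eA0,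
          Finset.sum_congr rfl eW1, Finset.sum_congr rfl eW0]
      rw [Finset.sum_congr rfl eQ1, Finset.sum_congr rfl eQ0] at IH0
      -- abbreviations
      have hSh1 := Sh ((r : ℤ) - K - 1) c g0
      have hSh2 := Sh ((r : ℤ) - K) c g0
      -- final assembly
      have efin1 : sg ((r : ℤ) - ((K+1 : ℕ) : ℤ)) (c - (nu (K+1) : ℤ))
          = sg ((r : ℤ) - K - 1) (c - g0) :=
        sg_congr (by push_cast; ring) (by rw [hg0])
      have efin2 : sg ((r : ℤ) - ((K+1 : ℕ) : ℤ) + 1) (c - (nu (K+1) : ℤ))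
          = sg ((r : ℤ) - K) (c - g0) :=
        sg_congr (by push_cast; ring) (by rw [hg0])
      have efin3 : sg ((r : ℤ) - ((K+1 : ℕ) : ℤ)) c = sg ((r : ℤ) - K - 1) c :=
        sg_congr (by push_cast; ring) rfl
      rw [efin1, efin2, efin3]
      exact step4 _ _ _ _ _ _ _ _ _ _ _ _ _ IH0 hSh1 hSh2
  
end Stmt16

namespace Stmt16
open Finset

section MonoidHelpers
variable {M : Type} [AddCommMonoid M]

lemma sum_Icc_split (f : ℕ → M) (a b : ℕ) (h : a ≤ b) :
    ∑ l ∈ Icc 1 b, f l = ∑ l ∈ Icc 1 a, f l + ∑ l ∈ Icc (a+1) b, f l := by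
  rw [show (Icc 1 b : Finset ℕ) = Ioc 0 b from by rw [← Finset.Icc_add_one_left_eq_Ioc]; rfl,
      show (Icc 1 a : Finset ℕ) = Ioc 0 a from by rw [← Finset.Icc_add_one_left_eq_Ioc]; rfl,
      show (Icc (a+1) b : Finset ℕ) = Ioc a b from by rw [← Finset.Icc_add_one_left_eq_Ioc]]
  exact (Finset.sum_Ioc_consecutive _ (by omega) h).symm

lemma sum_extend (f : ℕ → M) (Nn K : ℕ) (h : Nn ≤ K) (h0 : ∀ k, Nn < k → f k = 0) :
    ∑ l ∈ Icc 1 K, f l = ∑ l ∈ Icc 1 Nn, f l := by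
  have hz : ∑ l ∈ Icc (Nn+1) K, f l = 0 := Finset.sum_eq_zero (by
    intro k hk
    simp only [mem_Icc] at hk
    exact h0 k (by omega))
  rw [sum_Icc_split f Nn K h, hz, add_zero]

lemma sum_split_at (f : ℕ → M) (r K : ℕ) (h1 : 1 ≤ r) (h2 : r ≤ K) :
    ∑ l ∈ Icc 1 K, f l = (∑ l ∈ Icc 1 (r-1), f l + f r) + ∑ l ∈ Icc (r+1) K, f l := by
  rw [sum_Icc_split f r K h2]
  congr 1
  conv_lhs => rw [show r = r - 1 + 1 from by omega]
  rw [Finset.sum_Icc_succ_top (by omega : 1 ≤ r - 1 + 1), show r - 1 + 1 = r from by omega]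

lemma perk (e f g h x0 x1 y0 y1 : M)
    (s1 : h + x0 = e + y0) (s2 : f + x1 = g + y1) :
    x1 + e + f + y0 = x0 + g + h + y1 := by
  calc x1 + e + f + y0 = (f + x1) + (e + y0) := by abel
    _ = (g + y1) + (h + x0) := by rw [← s1, ← s2]
    _ = _ := by abel

end MonoidHelpers

lemma combine {M : Type} [AddCancelCommMonoid M]
    (OX NX OY NY R00 R11 R10 R01 t0 t1 SC0 SC1 s0 uK uR : M)
    (S1 : (OX + t1) + R00 + R11 + SC0 = ((NX + s0) + t0) + R10 + R01 + SC1)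
    (tele : SC1 + uK = SC0 + uR)
    (d4 : OY + s0 + t0 = NY + t1 + uK) :
    OX + OY + R00 + R11 = NX + NY + R10 + R01 + uR := by
  have h : (OX + OY + R00 + R11) + (t1 + s0 + t0 + SC1 + uK)
      = (NX + NY + R10 + R01 + uR) + (t1 + s0 + t0 + SC1 + uK) := by
    calc (OX + OY + R00 + R11) + (t1 + s0 + t0 + SC1 + uK)
        = (OX + OY + R00 + R11 + t1 + s0 + t0) + (SC1 + uK) := by abel
      _ = (OX + OY + R00 + R11 + t1 + s0 + t0) + (SC0 + uR) := by rw [tele]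
      _ = ((OX + t1) + R00 + R11 + SC0) + (OY + s0 + t0) + uR := by abel
      _ = (((NX + s0) + t0) + R10 + R01 + SC1) + (NY + t1 + uK) + uR := by rw [S1, d4]
      _ = (NX + NY + R10 + R01 + uR) + (t1 + s0 + t0 + SC1 + uK) := by abel
  exact add_right_cancel h

end Stmt16

namespace Stmt16
open Finset

lemma deltaStar (Nn : ℕ) (nu : ℕ → ℕ) (hnu : ∀ i j : ℕ, i ≤ j → nu j ≤ nu i)
    (hNn : ∀ k, Nn < k → nu k = 0) (r c : ℕ) (hr : 1 ≤ r) :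
    (∑ i ∈ Icc 1 r, sg ((r : ℤ) - i + 1) ((c : ℤ) - nu i))
    + (∑ l ∈ Icc 1 (nu r), sg ((r : ℤ) - transposeFn Nn nu l) ((c : ℤ) - l + 1))
    + (∑ k ∈ Icc 1 Nn, ∑ l ∈ Icc 1 (nu k), sg ((r : ℤ) - k) ((c : ℤ) - l))
    + (∑ k ∈ Icc 1 Nn, ∑ l ∈ Icc 1 (nu k), sg ((r : ℤ) - k + 1) ((c : ℤ) - l + 1))
    = (∑ i ∈ Icc 1 (r-1), sg ((r : ℤ) - i) ((c : ℤ) - nu i))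
    + (∑ l ∈ Icc 1 (nu r), sg ((r : ℤ) - transposeFn Nn nu l) ((c : ℤ) - l))
    + (∑ k ∈ Icc 1 Nn, ∑ l ∈ Icc 1 (nu k), sg ((r : ℤ) - k + 1) ((c : ℤ) - l))
    + (∑ k ∈ Icc 1 Nn, ∑ l ∈ Icc 1 (nu k), sg ((r : ℤ) - k) ((c : ℤ) - l + 1))
    + sg (r : ℤ) (c : ℤ) := by
  set K := max r Nn with hK
  have hrK : r ≤ K := le_max_left _ _
  have hNnK : Nn ≤ K := le_max_right _ _
  have hzero : ∀ (F : ℕ → ℕ → Multiset (ℤ × ℤ)) (k : ℕ), Nn < k →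
      ∑ l ∈ Icc 1 (nu k), F k l = 0 := by
    intro F k hk; rw [hNn k hk]; simp
  have ext00 : ∑ k ∈ Icc 1 K, ∑ l ∈ Icc 1 (nu k), sg ((r : ℤ) - k) ((c : ℤ) - l)
      = ∑ k ∈ Icc 1 Nn, ∑ l ∈ Icc 1 (nu k), sg ((r : ℤ) - k) ((c : ℤ) - l) :=
    sum_extend _ Nn K hNnK (fun k hk => hzero (fun k l => sg ((r : ℤ) - k) ((c : ℤ) - l)) k hk)
  have ext11 : ∑ k ∈ Icc 1 K, ∑ l ∈ Icc 1 (nu k), sg ((r : ℤ) - k + 1) ((c : ℤ) - l + 1)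
      = ∑ k ∈ Icc 1 Nn, ∑ l ∈ Icc 1 (nu k), sg ((r : ℤ) - k + 1) ((c : ℤ) - l + 1) :=
    sum_extend _ Nn K hNnK (fun k hk => hzero (fun k l => sg ((r : ℤ) - k + 1) ((c : ℤ) - l + 1)) k hk)
  have ext10 : ∑ k ∈ Icc 1 K, ∑ l ∈ Icc 1 (nu k), sg ((r : ℤ) - k + 1) ((c : ℤ) - l)
      = ∑ k ∈ Icc 1 Nn, ∑ l ∈ Icc 1 (nu k), sg ((r : ℤ) - k + 1) ((c : ℤ) - l) :=
    sum_extend _ Nn K hNnK (fun k hk => hzero (fun k l => sg ((r : ℤ) - k + 1) ((c : ℤ) - l)) k hk)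
  have ext01 : ∑ k ∈ Icc 1 K, ∑ l ∈ Icc 1 (nu k), sg ((r : ℤ) - k) ((c : ℤ) - l + 1)
      = ∑ k ∈ Icc 1 Nn, ∑ l ∈ Icc 1 (nu k), sg ((r : ℤ) - k) ((c : ℤ) - l + 1) :=
    sum_extend _ Nn K hNnK (fun k hk => hzero (fun k l => sg ((r : ℤ) - k) ((c : ℤ) - l + 1)) k hk)
  -- per-row identity summed over k
  have perk_all : ∀ k ∈ Icc 1 K,
      sg ((r : ℤ) - k + 1) ((c : ℤ) - nu k)
        + (∑ l ∈ Icc 1 (nu k), sg ((r : ℤ) - k) ((c : ℤ) - l))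
        + (∑ l ∈ Icc 1 (nu k), sg ((r : ℤ) - k + 1) ((c : ℤ) - l + 1))
        + sg ((r : ℤ) - k) (c : ℤ)
      = sg ((r : ℤ) - k) ((c : ℤ) - nu k)
        + (∑ l ∈ Icc 1 (nu k), sg ((r : ℤ) - k + 1) ((c : ℤ) - l))
        + (∑ l ∈ Icc 1 (nu k), sg ((r : ℤ) - k) ((c : ℤ) - l + 1))
        + sg ((r : ℤ) - k + 1) (c : ℤ) := by
    intro k _
    exact perk _ _ _ _ _ _ _ _ (Sh ((r : ℤ) - k) (c : ℤ) (nu k))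
      (Sh ((r : ℤ) - k + 1) (c : ℤ) (nu k))
  have S1 := Finset.sum_congr rfl perk_all
  simp only [Finset.sum_add_distrib] at S1
  -- telescope of the single column
  have tele : (∑ k ∈ Icc 1 K, sg ((r : ℤ) - k + 1) (c : ℤ)) + sg ((r : ℤ) - K) (c : ℤ)
      = (∑ k ∈ Icc 1 K, sg ((r : ℤ) - k) (c : ℤ)) + sg (r : ℤ) (c : ℤ) := by
    have h := shiftZ (M := Multiset (ℤ × ℤ)) (fun x => sg ((r : ℤ) - x) (c : ℤ)) K
    have e1 : ∀ k ∈ Icc 1 K, sg ((r : ℤ) - ((k : ℤ) - 1)) (c : ℤ)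
        = sg ((r : ℤ) - k + 1) (c : ℤ) := fun k _ => sg_congr (by ring) rfl
    rw [Finset.sum_congr rfl e1] at h
    have e2 : sg ((r : ℤ) - 0) (c : ℤ) = sg (r : ℤ) (c : ℤ) := sg_congr (by ring) rfl
    rw [e2] at h
    exact h
  -- splits of the single-column nu sums
  have splitX1 : ∑ k ∈ Icc 1 K, sg ((r : ℤ) - k + 1) ((c : ℤ) - nu k)
      = (∑ i ∈ Icc 1 r, sg ((r : ℤ) - i + 1) ((c : ℤ) - nu i))
        + ∑ k ∈ Icc (r+1) K, sg ((r : ℤ) - k + 1) ((c : ℤ) - nu k) :=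
    sum_Icc_split _ r K hrK
  have splitX0 : ∑ k ∈ Icc 1 K, sg ((r : ℤ) - k) ((c : ℤ) - nu k)
      = ((∑ i ∈ Icc 1 (r-1), sg ((r : ℤ) - i) ((c : ℤ) - nu i)) + sg 0 ((c : ℤ) - nu r))
        + ∑ k ∈ Icc (r+1) K, sg ((r : ℤ) - k) ((c : ℤ) - nu k) := by
    rw [sum_split_at _ r K hr hrK]
    congr 2
    exact sg_congr (by ring) rfl
  rw [splitX1, splitX0] at S1
  -- delta4
  have d4 := delta4 K nu hnu (fun k hk => hNn k (lt_of_le_of_lt hNnK hk)) r (c : ℤ) hr hrK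
  have etr1 : ∀ l ∈ Icc 1 (nu r), sg ((r : ℤ) - transposeFn K nu l) ((c : ℤ) - l + 1)
      = sg ((r : ℤ) - transposeFn Nn nu l) ((c : ℤ) - l + 1) := by
    intro l hl; simp only [mem_Icc] at hl
    exact sg_congr (by rw [tr_cutoff Nn K nu hNn hNnK hl.1]) rfl
  have etr0 : ∀ l ∈ Icc 1 (nu r), sg ((r : ℤ) - transposeFn K nu l) ((c : ℤ) - l)
      = sg ((r : ℤ) - transposeFn Nn nu l) ((c : ℤ) - l) := by
    intro l hl; simp only [mem_Icc] at hl
    exact sg_congr (by rw [tr_cutoff Nn K nu hNn hNnK hl.1]) rfl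
  rw [Finset.sum_congr rfl etr1, Finset.sum_congr rfl etr0] at d4
  rw [← ext00, ← ext11, ← ext10, ← ext01]
  exact combine _ _ _ _ _ _ _ _ _ _ _ _ _ _ _ S1 tele d4

end Stmt16

namespace Stmt16
open Finset

lemma final_comb {M : Type} [AddCommMonoid M]
    (Core NX OX CoreY NY OY P00 P11 P10 P01 R00 R11 R10 R01 MA MB urc : M)
    (IH : (Core + NX) + (CoreY + NY) + P00 + P11 = P10 + P01 + MA + MB)
    (dS : OX + OY + R00 + R11 = NX + NY + R10 + R01 + urc) :
    (Core + OX) + (CoreY + OY) + (P00 + R00) + (P11 + R11)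
      = (P10 + R10) + (P01 + R01) + (MA + urc) + MB := by
  calc (Core + OX) + (CoreY + OY) + (P00 + R00) + (P11 + R11)
      = (Core + CoreY + P00 + P11) + (OX + OY + R00 + R11) := by abel
    _ = (Core + CoreY + P00 + P11) + (NX + NY + R10 + R01 + urc) := by rw [dS]
    _ = ((Core + NX) + (CoreY + NY) + P00 + P11) + (R10 + R01 + urc) := by abel
    _ = (P10 + P01 + MA + MB) + (R10 + R01 + urc) := by rw [IH]
    _ = _ := by abel

lemma baseNu (Nn : ℕ) (lam nu : ℕ → ℕ) (hnu : ∀ i j : ℕ, i ≤ j → nu j ≤ nu i)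
    (hz : ∀ k, 1 ≤ k → lam k = 0) :
    ∑ k ∈ Icc 1 Nn, ∑ l ∈ Icc 1 (nu k), sg ((k : ℤ) - transposeFn Nn nu l) ((lam k : ℤ) - l + 1)
      = ∑ k ∈ Icc 1 Nn, ∑ l ∈ Icc 1 (nu k), sg (1 - (k : ℤ)) (1 - (l : ℤ)) := by
  have e0 : ∑ k ∈ Icc 1 Nn, ∑ l ∈ Icc 1 (nu k),
        sg ((k : ℤ) - transposeFn Nn nu l) ((lam k : ℤ) - l + 1)
      = ∑ k ∈ Icc 1 Nn, ∑ l ∈ Icc 1 (nu k),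
        sg ((k : ℤ) - transposeFn Nn nu l) (1 - (l : ℤ)) := by
    apply Finset.sum_congr rfl
    intro k hk
    simp only [mem_Icc] at hk
    apply Finset.sum_congr rfl
    intro l _
    exact sg_congr rfl (by rw [hz k hk.1]; push_cast; ring)
  rw [e0,
    FT Nn (nu 1) nu hnu le_rfl (fun k l => sg ((k : ℤ) - transposeFn Nn nu l) (1 - (l : ℤ))),
    FT Nn (nu 1) nu hnu le_rfl (fun k l => sg (1 - (k : ℤ)) (1 - (l : ℤ)))]
  apply Finset.sum_congr rfl
  intro l _
  have hrefl := reflectZ (M := Multiset (ℤ × ℤ))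
    (fun x => sg (x - (transposeFn Nn nu l : ℤ)) (1 - (l : ℤ))) (transposeFn Nn nu l)
  rw [hrefl]
  apply Finset.sum_congr rfl
  intro k _
  exact sg_congr (by push_cast; ring) rfl

lemma mkey0 (Nl Nn : ℕ) (lam nu : ℕ → ℕ)
    (hz : ∀ i, 1 ≤ i → lam i = 0) (hnu : ∀ i j : ℕ, i ≤ j → nu j ≤ nu i) :
    (∑ i ∈ Icc 1 Nl, ∑ j ∈ Icc 1 (lam i),
        sg ((transposeFn Nl lam j : ℤ) - i + 1) ((j : ℤ) - nu i))
    + (∑ k ∈ Icc 1 Nn, ∑ l ∈ Icc 1 (nu k),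
        sg ((k : ℤ) - transposeFn Nn nu l) ((lam k : ℤ) - l + 1))
    + (∑ i ∈ Icc 1 Nl, ∑ j ∈ Icc 1 (lam i), ∑ k ∈ Icc 1 Nn, ∑ l ∈ Icc 1 (nu k),
        sg ((i : ℤ) - k) ((j : ℤ) - l))
    + (∑ i ∈ Icc 1 Nl, ∑ j ∈ Icc 1 (lam i), ∑ k ∈ Icc 1 Nn, ∑ l ∈ Icc 1 (nu k),
        sg ((i : ℤ) - k + 1) ((j : ℤ) - l + 1))
    = (∑ i ∈ Icc 1 Nl, ∑ j ∈ Icc 1 (lam i), ∑ k ∈ Icc 1 Nn, ∑ l ∈ Icc 1 (nu k),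
        sg ((i : ℤ) - k + 1) ((j : ℤ) - l))
    + (∑ i ∈ Icc 1 Nl, ∑ j ∈ Icc 1 (lam i), ∑ k ∈ Icc 1 Nn, ∑ l ∈ Icc 1 (nu k),
        sg ((i : ℤ) - k) ((j : ℤ) - l + 1))
    + (∑ i ∈ Icc 1 Nl, ∑ j ∈ Icc 1 (lam i), sg (i : ℤ) (j : ℤ))
    + (∑ k ∈ Icc 1 Nn, ∑ l ∈ Icc 1 (nu k), sg (1 - (k : ℤ)) (1 - (l : ℤ))) := by
  have hempty : ∀ (F : ℕ → ℕ → Multiset (ℤ × ℤ)),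
      ∑ i ∈ Icc 1 Nl, ∑ j ∈ Icc 1 (lam i), F i j = 0 := by
    intro F
    apply Finset.sum_eq_zero
    intro i hi
    simp only [mem_Icc] at hi
    rw [hz i hi.1]
    simp
  rw [hempty (fun i j => sg ((transposeFn Nl lam j : ℤ) - i + 1) ((j : ℤ) - nu i)),
      hempty (fun i j => ∑ k ∈ Icc 1 Nn, ∑ l ∈ Icc 1 (nu k), sg ((i : ℤ) - k) ((j : ℤ) - l)),
      hempty (fun i j => ∑ k ∈ Icc 1 Nn, ∑ l ∈ Icc 1 (nu k), sg ((i : ℤ) - k + 1) ((j : ℤ) - l + 1)),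
      hempty (fun i j => ∑ k ∈ Icc 1 Nn, ∑ l ∈ Icc 1 (nu k), sg ((i : ℤ) - k + 1) ((j : ℤ) - l)),
      hempty (fun i j => ∑ k ∈ Icc 1 Nn, ∑ l ∈ Icc 1 (nu k), sg ((i : ℤ) - k) ((j : ℤ) - l + 1)),
      hempty (fun i j => sg (i : ℤ) (j : ℤ))]
  simp only [zero_add, add_zero]
  exact baseNu Nn lam nu hnu hz

end Stmt16

namespace Stmt16
open Finset

lemma mkey (B : ℕ) : ∀ (Nl Nn : ℕ) (lam nu : ℕ → ℕ),
    (∑ i ∈ Icc 1 Nl, lam i) ≤ B →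
    (∀ i j : ℕ, i ≤ j → lam j ≤ lam i) → (∀ i, Nl < i → lam i = 0) →
    (∀ i j : ℕ, i ≤ j → nu j ≤ nu i) → (∀ i, Nn < i → nu i = 0) →
    (∑ i ∈ Icc 1 Nl, ∑ j ∈ Icc 1 (lam i),
        sg ((transposeFn Nl lam j : ℤ) - i + 1) ((j : ℤ) - nu i))
    + (∑ k ∈ Icc 1 Nn, ∑ l ∈ Icc 1 (nu k),
        sg ((k : ℤ) - transposeFn Nn nu l) ((lam k : ℤ) - l + 1))
    + (∑ i ∈ Icc 1 Nl, ∑ j ∈ Icc 1 (lam i), ∑ k ∈ Icc 1 Nn, ∑ l ∈ Icc 1 (nu k),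
        sg ((i : ℤ) - k) ((j : ℤ) - l))
    + (∑ i ∈ Icc 1 Nl, ∑ j ∈ Icc 1 (lam i), ∑ k ∈ Icc 1 Nn, ∑ l ∈ Icc 1 (nu k),
        sg ((i : ℤ) - k + 1) ((j : ℤ) - l + 1))
    = (∑ i ∈ Icc 1 Nl, ∑ j ∈ Icc 1 (lam i), ∑ k ∈ Icc 1 Nn, ∑ l ∈ Icc 1 (nu k),
        sg ((i : ℤ) - k + 1) ((j : ℤ) - l))
    + (∑ i ∈ Icc 1 Nl, ∑ j ∈ Icc 1 (lam i), ∑ k ∈ Icc 1 Nn, ∑ l ∈ Icc 1 (nu k),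
        sg ((i : ℤ) - k) ((j : ℤ) - l + 1))
    + (∑ i ∈ Icc 1 Nl, ∑ j ∈ Icc 1 (lam i), sg (i : ℤ) (j : ℤ))
    + (∑ k ∈ Icc 1 Nn, ∑ l ∈ Icc 1 (nu k), sg (1 - (k : ℤ)) (1 - (l : ℤ))) := by
  induction B with
  | zero =>
    intro Nl Nn lam nu hsum hlam hNl hnu hNn
    have hz : ∀ i, 1 ≤ i → lam i = 0 := by
      intro i hi
      by_cases hiN : i ≤ Nl
      · have h0 : ∑ i ∈ Icc 1 Nl, lam i = 0 := Nat.le_zero.mp hsum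
        have := Finset.sum_eq_zero_iff.mp h0 i (by simp [mem_Icc, hi, hiN])
        exact this
      · exact hNl i (by omega)
    exact mkey0 Nl Nn lam nu hz hnu
  | succ B ih =>
    intro Nl Nn lam nu hsum hlam hNl hnu hNn
    by_cases hz : ∀ i, 1 ≤ i → lam i = 0
    · exact mkey0 Nl Nn lam nu hz hnu
    · push_neg at hz
      obtain ⟨i0, hi01, hi0ne⟩ := hz
      have hi0Nl : i0 ≤ Nl := by
        by_contra h
        exact hi0ne (hNl i0 (by omega))
      set T : Finset ℕ := (Icc 1 Nl).filter (fun i => lam i ≠ 0) with hT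
      have hTne : T.Nonempty := ⟨i0, by simp [hT, mem_filter, mem_Icc, hi01, hi0Nl, hi0ne]⟩
      set r : ℕ := T.max' hTne with hrdef
      have hrT : r ∈ T := T.max'_mem hTne
      have hr1 : 1 ≤ r := by
        have := hrT; simp only [hT, mem_filter, mem_Icc] at this; exact this.1.1
      have hrNl : r ≤ Nl := by
        have := hrT; simp only [hT, mem_filter, mem_Icc] at this; exact this.1.2
      have hlamr : lam r ≠ 0 := by
        have := hrT; simp only [hT, mem_filter, mem_Icc] at this; exact this.2
      set c : ℕ := lam r with hcdef
      have hc1 : 1 ≤ c := by omega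
      have hafter : ∀ i, r < i → lam i = 0 := by
        intro i hi
        by_cases hiN : i ≤ Nl
        · by_contra hne
          have : i ∈ T := by simp [hT, mem_filter, mem_Icc, hne]; omega
          have := T.le_max' i this
          omega
        · exact hNl i (by omega)
      set lam' : ℕ → ℕ := Function.update lam r (c - 1) with hlam'def
      have hlam'_at : lam' r = c - 1 := by simp [hlam'def]
      have hlam'_ne : ∀ i, i ≠ r → lam' i = lam i := by
        intro i hi; simp [hlam'def, Function.update_apply, hi]
      have hle_c : ∀ i, 1 ≤ i → i ≤ r → c ≤ lam i := fun i _ hir => hlam i r hir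
      have hlam' : ∀ i j : ℕ, i ≤ j → lam' j ≤ lam' i := by
        intro i j hij
        rcases eq_or_ne j r with hj | hj
        · subst hj
          rw [hlam'_at]
          rcases eq_or_ne i r with hi | hi
          · rw [hi, hlam'_at]
          · rw [hlam'_ne i hi]
            have := hlam i r hij
            omega
        · rw [hlam'_ne j hj]
          rcases eq_or_ne i r with hi | hi
          · subst hi
            have : lam j = 0 := hafter j (by omega)
            omega
          · rw [hlam'_ne i hi]; exact hlam i j hij
      have hNl' : ∀ i, Nl < i → lam' i = 0 := by
        intro i hi
        rw [hlam'_ne i (by omega)]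
        exact hNl i hi
      have hsum' : (∑ i ∈ Icc 1 Nl, lam' i) ≤ B := by
        have hrmem : r ∈ Icc 1 Nl := by simp [mem_Icc, hr1, hrNl]
        have h1 : ∑ i ∈ Icc 1 Nl, lam' i = (c - 1) + ∑ i ∈ (Icc 1 Nl).erase r, lam i := by
          rw [← Finset.add_sum_erase _ lam' hrmem, hlam'_at]
          congr 1
          apply Finset.sum_congr rfl
          intro i hi
          exact hlam'_ne i (Finset.ne_of_mem_erase hi)
        have h2 : ∑ i ∈ Icc 1 Nl, lam i = c + ∑ i ∈ (Icc 1 Nl).erase r, lam i := by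
          rw [← Finset.add_sum_erase _ lam hrmem]
        omega
      -- transpose facts
      have hfilt : (Icc 1 Nl).filter (fun i => c ≤ lam i) = Icc 1 r := by
        ext i
        simp only [mem_filter, mem_Icc]
        constructor
        · rintro ⟨⟨h1, h2⟩, h3⟩
          refine ⟨h1, ?_⟩
          by_contra hcon
          have := hafter i (by omega)
          omega
        · rintro ⟨h1, h2⟩
          exact ⟨⟨h1, le_trans h2 hrNl⟩, hle_c i h1 h2⟩
      have htrc : transposeFn Nl lam c = r := by
        unfold transposeFn
        rw [hfilt, Nat.card_Icc]
        omega
      have hfilt' : (Icc 1 Nl).filter (fun i => c ≤ lam' i) = Icc 1 (r - 1) := by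
        ext i
        simp only [mem_filter, mem_Icc]
        constructor
        · rintro ⟨⟨h1, h2⟩, h3⟩
          refine ⟨h1, ?_⟩
          have hir : i ≠ r := by
            intro hcon
            rw [hcon, hlam'_at] at h3
            omega
          rw [hlam'_ne i hir] at h3
          have : i ≤ r := by
            by_contra hcon
            have := hafter i (by omega)
            omega
          omega
        · rintro ⟨h1, h2⟩
          have hir : i ≠ r := by omega
          rw [hlam'_ne i hir]
          exact ⟨⟨h1, by omega⟩, hle_c i h1 (by omega)⟩
      have htr'c : transposeFn Nl lam' c = r - 1 := by
        unfold transposeFn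
        rw [hfilt', Nat.card_Icc]
        omega
      have htr'j : ∀ j, j ≠ c → transposeFn Nl lam' j = transposeFn Nl lam j := by
        intro j hj
        unfold transposeFn
        congr 1
        apply Finset.filter_congr
        intro i _
        rcases eq_or_ne i r with hi | hi
        · subst hi
          rw [hlam'_at]
          constructor
          · intro h; omega
          · intro h
            rcases eq_or_ne j c with h' | h'
            · exact absurd h' hj
            · rw [← hcdef] at h; omega
        · rw [hlam'_ne i hi]
      have hrmem : r ∈ Icc 1 Nl := by simp only [mem_Icc]; exact ⟨hr1, hrNl⟩
      -- decomposition of the X-sums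
      have decompX : ∀ (ll : ℕ → ℕ),
          (∑ i ∈ Icc 1 Nl, ∑ j ∈ Icc 1 (ll i),
              sg ((transposeFn Nl ll j : ℤ) - i + 1) ((j : ℤ) - nu i))
            = (∑ i ∈ Icc 1 Nl, ∑ j ∈ (Icc 1 (ll i)).filter (fun j => j ≠ c),
                sg ((transposeFn Nl ll j : ℤ) - i + 1) ((j : ℤ) - nu i))
              + ∑ i ∈ (Icc 1 Nl).filter (fun i => c ≤ ll i),
                  sg ((transposeFn Nl ll c : ℤ) - i + 1) ((c : ℤ) - nu i) := by
        intro ll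
        have per_i : ∀ i ∈ Icc 1 Nl, ∑ j ∈ Icc 1 (ll i),
              sg ((transposeFn Nl ll j : ℤ) - i + 1) ((j : ℤ) - nu i)
            = (∑ j ∈ (Icc 1 (ll i)).filter (fun j => j ≠ c),
                sg ((transposeFn Nl ll j : ℤ) - i + 1) ((j : ℤ) - nu i))
              + (if c ≤ ll i then sg ((transposeFn Nl ll c : ℤ) - i + 1) ((c : ℤ) - nu i)
                  else 0) := by
          intro i _
          rw [← Finset.sum_filter_add_sum_filter_not (Icc 1 (ll i)) (fun j => j ≠ c)]
          congr 1
          have hnn : (Icc 1 (ll i)).filter (fun j => ¬ j ≠ c)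
              = (Icc 1 (ll i)).filter (fun j => j = c) := by
            apply Finset.filter_congr; intro j _; simp [not_not]
          rw [hnn, Finset.filter_eq']
          by_cases hci : c ∈ Icc 1 (ll i)
          · rw [if_pos hci, Finset.sum_singleton, if_pos]
            simp only [mem_Icc] at hci
            exact hci.2
          · rw [if_neg hci, Finset.sum_empty, if_neg]
            simp only [mem_Icc, not_and, not_le] at hci
            intro hcon
            have := hci hc1
            omega
        rw [Finset.sum_congr rfl per_i, Finset.sum_add_distrib, ← Finset.sum_filter]
      have D1 := decompX lam
      rw [hfilt, htrc] at D1
      have D1' := decompX lam'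
      rw [hfilt', htr'c] at D1'
      have eNX : ∀ i ∈ Icc 1 (r-1),
          sg (((r-1 : ℕ) : ℤ) - i + 1) ((c : ℤ) - nu i) = sg ((r : ℤ) - i) ((c : ℤ) - nu i) :=
        fun i _ => sg_congr (by omega) rfl
      rw [Finset.sum_congr rfl eNX] at D1'
      have CoreEq : (∑ i ∈ Icc 1 Nl, ∑ j ∈ (Icc 1 (lam' i)).filter (fun j => j ≠ c),
              sg ((transposeFn Nl lam' j : ℤ) - i + 1) ((j : ℤ) - nu i))
          = (∑ i ∈ Icc 1 Nl, ∑ j ∈ (Icc 1 (lam i)).filter (fun j => j ≠ c),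
              sg ((transposeFn Nl lam j : ℤ) - i + 1) ((j : ℤ) - nu i)) := by
        apply Finset.sum_congr rfl
        intro i _
        have hset : (Icc 1 (lam' i)).filter (fun j => j ≠ c)
            = (Icc 1 (lam i)).filter (fun j => j ≠ c) := by
          rcases eq_or_ne i r with hi | hi
          · subst hi
            rw [hlam'_at]
            ext j
            simp only [mem_filter, mem_Icc]
            rw [← hcdef]
            omega
          · rw [hlam'_ne i hi]
        rw [hset]
        apply Finset.sum_congr rfl
        intro j hj
        have hjc : j ≠ c := (Finset.mem_filter.mp hj).2
        exact sg_congr (by rw [htr'j j hjc]) rfl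
      rw [CoreEq] at D1'
      -- decomposition of the Y-sums
      have decompY : ∀ (ll : ℕ → ℕ),
          (∑ k ∈ Icc 1 Nn, ∑ l ∈ Icc 1 (nu k),
              sg ((k : ℤ) - transposeFn Nn nu l) ((ll k : ℤ) - l + 1))
            = (∑ k ∈ (Icc 1 Nn).erase r, ∑ l ∈ Icc 1 (nu k),
                sg ((k : ℤ) - transposeFn Nn nu l) ((ll k : ℤ) - l + 1))
              + ∑ l ∈ Icc 1 (nu r), sg ((r : ℤ) - transposeFn Nn nu l) ((ll r : ℤ) - l + 1) := by
        intro ll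
        by_cases hrNn : r ∈ Icc 1 Nn
        · rw [← Finset.add_sum_erase _ _ hrNn]
          abel
        · rw [Finset.erase_eq_of_notMem hrNn]
          have hnur : nu r = 0 := by
            apply hNn
            simp only [mem_Icc] at hrNn
            omega
          rw [hnur]
          simp
      have D2 := decompY lam
      rw [← hcdef] at D2
      have D2' := decompY lam'
      rw [hlam'_at] at D2'
      have eNY : ∀ l ∈ Icc 1 (nu r),
          sg ((r : ℤ) - transposeFn Nn nu l) (((c - 1 : ℕ) : ℤ) - l + 1)
            = sg ((r : ℤ) - transposeFn Nn nu l) ((c : ℤ) - l) :=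
        fun l _ => sg_congr rfl (by omega)
      rw [Finset.sum_congr rfl eNY] at D2'
      have CoreYEq : (∑ k ∈ (Icc 1 Nn).erase r, ∑ l ∈ Icc 1 (nu k),
              sg ((k : ℤ) - transposeFn Nn nu l) ((lam' k : ℤ) - l + 1))
          = (∑ k ∈ (Icc 1 Nn).erase r, ∑ l ∈ Icc 1 (nu k),
              sg ((k : ℤ) - transposeFn Nn nu l) ((lam k : ℤ) - l + 1)) := by
        apply Finset.sum_congr rfl
        intro k hk
        apply Finset.sum_congr rfl
        intro l _
        exact sg_congr rfl (by rw [hlam'_ne k (Finset.ne_of_mem_erase hk)])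
      rw [CoreYEq] at D2'
      -- row decompositions for the quadruple sums and A
      have hrow : ∀ (G : ℕ → ℕ → Multiset (ℤ × ℤ)),
          (∑ i ∈ Icc 1 Nl, ∑ j ∈ Icc 1 (lam i), G i j)
            = (∑ i ∈ Icc 1 Nl, ∑ j ∈ Icc 1 (lam' i), G i j) + G r c := by
        intro G
        have per_i : ∀ i ∈ Icc 1 Nl, ∑ j ∈ Icc 1 (lam i), G i j
            = ∑ j ∈ Icc 1 (lam' i), G i j + (if i = r then G r c else 0) := by
          intro i _
          rcases eq_or_ne i r with hi | hi
          · subst hi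
            rw [if_pos rfl, hlam'_at]
            have hs := sum_split_at (fun j => G r j) c c hc1 le_rfl
            rw [show (Icc (c+1) c : Finset ℕ) = ∅ from Finset.Icc_eq_empty (by omega),
                Finset.sum_empty, add_zero] at hs
            rw [← hcdef]
            exact hs
          · rw [hlam'_ne i hi, if_neg hi, add_zero]
        rw [Finset.sum_congr rfl per_i, Finset.sum_add_distrib]
        congr 1
        rw [Finset.sum_ite_eq' (Icc 1 Nl) r (fun _ => G r c), if_pos hrmem]
      have D300 := hrow (fun i j => ∑ k ∈ Icc 1 Nn, ∑ l ∈ Icc 1 (nu k),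
        sg ((i : ℤ) - k) ((j : ℤ) - l))
      have D311 := hrow (fun i j => ∑ k ∈ Icc 1 Nn, ∑ l ∈ Icc 1 (nu k),
        sg ((i : ℤ) - k + 1) ((j : ℤ) - l + 1))
      have D310 := hrow (fun i j => ∑ k ∈ Icc 1 Nn, ∑ l ∈ Icc 1 (nu k),
        sg ((i : ℤ) - k + 1) ((j : ℤ) - l))
      have D301 := hrow (fun i j => ∑ k ∈ Icc 1 Nn, ∑ l ∈ Icc 1 (nu k),
        sg ((i : ℤ) - k) ((j : ℤ) - l + 1))
      have DA := hrow (fun i j => sg (i : ℤ) (j : ℤ))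
      -- conclude
      have IH := ih Nl Nn lam' nu hsum' hlam' hNl' hnu hNn
      have dS := deltaStar Nn nu hnu hNn r c hr1
      rw [D1, D2, D300, D311, D310, D301, DA]
      rw [D1', D2'] at IH
      exact final_comb _ _ _ _ _ _ _ _ _ _ _ _ _ _ _ _ _ IH dS
  
end Stmt16

namespace Stmt16
open Finset

noncomputable def TT (t q1 q2 : ℂ) (p : ℤ × ℤ) : ℂ := 1 - t * q1 ^ p.1 * q2 ^ p.2

lemma prodM (g : ℤ × ℤ → ℂ) (s : Finset ℕ) (F : ℕ → Multiset (ℤ × ℤ)) :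
    ((∑ i ∈ s, F i).map g).prod = ∏ i ∈ s, ((F i).map g).prod := by
  induction s using Finset.cons_induction with
  | empty => simp
  | cons a s ha ih =>
      rw [Finset.sum_cons, Finset.prod_cons, Multiset.map_add, Multiset.prod_add, ih]

lemma L2 (g : ℤ × ℤ → ℂ) (s : Finset ℕ) (tt : ℕ → Finset ℕ) (a b : ℕ → ℕ → ℤ) :
    ((∑ i ∈ s, ∑ j ∈ tt i, sg (a i j) (b i j)).map g).prod
      = ∏ i ∈ s, ∏ j ∈ tt i, g (a i j, b i j) := by
  rw [prodM]
  apply Finset.prod_congr rfl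
  intro i _
  rw [prodM]
  apply Finset.prod_congr rfl
  intro j _
  simp [sg]

lemma L4 (g : ℤ × ℤ → ℂ) (s : Finset ℕ) (t1 : ℕ → Finset ℕ) (t2 : Finset ℕ)
    (t3 : ℕ → Finset ℕ) (a b : ℕ → ℕ → ℕ → ℕ → ℤ) :
    ((∑ i ∈ s, ∑ j ∈ t1 i, ∑ k ∈ t2, ∑ l ∈ t3 k, sg (a i j k l) (b i j k l)).map g).prod
      = ∏ i ∈ s, ∏ j ∈ t1 i, ∏ k ∈ t2, ∏ l ∈ t3 k, g (a i j k l, b i j k l) := by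
  rw [prodM]
  apply Finset.prod_congr rfl
  intro i _
  rw [prodM]
  apply Finset.prod_congr rfl
  intro j _
  rw [prodM]
  apply Finset.prod_congr rfl
  intro k _
  rw [prodM]
  apply Finset.prod_congr rfl
  intro l _
  simp [sg]

lemma keyC (t q1 q2 : ℂ) (Nl Nn : ℕ) (lam nu : ℕ → ℕ)
    (hlam : ∀ i j : ℕ, i ≤ j → lam j ≤ lam i) (hNl : ∀ i, Nl < i → lam i = 0)
    (hnu : ∀ i j : ℕ, i ≤ j → nu j ≤ nu i) (hNn : ∀ i, Nn < i → nu i = 0) :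
    (∏ i ∈ Icc 1 Nl, ∏ j ∈ Icc 1 (lam i),
        TT t q1 q2 ((transposeFn Nl lam j : ℤ) - i + 1, (j : ℤ) - nu i))
    * (∏ k ∈ Icc 1 Nn, ∏ l ∈ Icc 1 (nu k),
        TT t q1 q2 ((k : ℤ) - transposeFn Nn nu l, (lam k : ℤ) - l + 1))
    * (∏ i ∈ Icc 1 Nl, ∏ j ∈ Icc 1 (lam i), ∏ k ∈ Icc 1 Nn, ∏ l ∈ Icc 1 (nu k),
        TT t q1 q2 ((i : ℤ) - k, (j : ℤ) - l))
    * (∏ i ∈ Icc 1 Nl, ∏ j ∈ Icc 1 (lam i), ∏ k ∈ Icc 1 Nn, ∏ l ∈ Icc 1 (nu k),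
        TT t q1 q2 ((i : ℤ) - k + 1, (j : ℤ) - l + 1))
    = (∏ i ∈ Icc 1 Nl, ∏ j ∈ Icc 1 (lam i), ∏ k ∈ Icc 1 Nn, ∏ l ∈ Icc 1 (nu k),
        TT t q1 q2 ((i : ℤ) - k + 1, (j : ℤ) - l))
    * (∏ i ∈ Icc 1 Nl, ∏ j ∈ Icc 1 (lam i), ∏ k ∈ Icc 1 Nn, ∏ l ∈ Icc 1 (nu k),
        TT t q1 q2 ((i : ℤ) - k, (j : ℤ) - l + 1))
    * (∏ i ∈ Icc 1 Nl, ∏ j ∈ Icc 1 (lam i), TT t q1 q2 ((i : ℤ), (j : ℤ)))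
    * (∏ k ∈ Icc 1 Nn, ∏ l ∈ Icc 1 (nu k), TT t q1 q2 (1 - (k : ℤ), 1 - (l : ℤ))) := by
  have h := congrArg (fun m : Multiset (ℤ × ℤ) => (m.map (TT t q1 q2)).prod)
    (mkey (∑ i ∈ Icc 1 Nl, lam i) Nl Nn lam nu le_rfl hlam hNl hnu hNn)
  simp only [Multiset.map_add, Multiset.prod_add] at h
  rw [L2 (TT t q1 q2) (Icc 1 Nl) (fun i => Icc 1 (lam i))
        (fun i j => (transposeFn Nl lam j : ℤ) - i + 1) (fun i j => (j : ℤ) - nu i),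
      L2 (TT t q1 q2) (Icc 1 Nn) (fun k => Icc 1 (nu k))
        (fun k l => (k : ℤ) - transposeFn Nn nu l) (fun k l => (lam k : ℤ) - l + 1),
      L4 (TT t q1 q2) (Icc 1 Nl) (fun i => Icc 1 (lam i)) (Icc 1 Nn) (fun k => Icc 1 (nu k))
        (fun i j k l => (i : ℤ) - k) (fun i j k l => (j : ℤ) - l),
      L4 (TT t q1 q2) (Icc 1 Nl) (fun i => Icc 1 (lam i)) (Icc 1 Nn) (fun k => Icc 1 (nu k))
        (fun i j k l => (i : ℤ) - k + 1) (fun i j k l => (j : ℤ) - l + 1),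
      L4 (TT t q1 q2) (Icc 1 Nl) (fun i => Icc 1 (lam i)) (Icc 1 Nn) (fun k => Icc 1 (nu k))
        (fun i j k l => (i : ℤ) - k + 1) (fun i j k l => (j : ℤ) - l),
      L4 (TT t q1 q2) (Icc 1 Nl) (fun i => Icc 1 (lam i)) (Icc 1 Nn) (fun k => Icc 1 (nu k))
        (fun i j k l => (i : ℤ) - k) (fun i j k l => (j : ℤ) - l + 1),
      L2 (TT t q1 q2) (Icc 1 Nl) (fun i => Icc 1 (lam i))
        (fun i j => (i : ℤ)) (fun i j => (j : ℤ)),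
      L2 (TT t q1 q2) (Icc 1 Nn) (fun k => Icc 1 (nu k))
        (fun k l => 1 - (k : ℤ)) (fun k l => 1 - (l : ℤ))] at h
  exact h

end Stmt16

open Finset Stmt16

/-- For generic `q1, q2, u1, u2 ∈ ℂˣ` and partitions `λ, ν`, the Nekrasov
factor can be rewritten as
`N_{λν}(u1/u2; q1,q2) = ∏_{x∈λ,y∈ν} S(χ^λ_x/χ^ν_y) · ∏_{x∈λ} (1 - q1 q2 χ^λ_x/u2)
  · ∏_{y∈ν} (1 - u1/χ^ν_y)`, where `χ^λ_{(i,j)} = u1 q1^{i-1} q2^{j-1}`,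
`χ^ν_{(i,j)} = u2 q1^{i-1} q2^{j-1}` and `S(w) = (1-q1 w)(1-q2 w)/((1-w)(1-q1 q2 w))`. -/
theorem stmt16 (q1 q2 u1 u2 : ℂ)
    (hq1 : q1 ≠ 0) (hq2 : q2 ≠ 0) (hu1 : u1 ≠ 0) (hu2 : u2 ≠ 0)
    (Nl Nn : ℕ) (lam nu : ℕ → ℕ)
    (hlam : ∀ i j : ℕ, i ≤ j → lam j ≤ lam i) (hNl : ∀ i : ℕ, Nl < i → lam i = 0)
    (hnu : ∀ i j : ℕ, i ≤ j → nu j ≤ nu i) (hNn : ∀ i : ℕ, Nn < i → nu i = 0)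
    (S : ℂ → ℂ)
    (hS : ∀ w : ℂ, S w = ((1 - q1 * w) * (1 - q2 * w)) / ((1 - w) * (1 - q1 * q2 * w)))
    (hgen : ∀ i j k l : ℕ, 1 ≤ i → 1 ≤ j → j ≤ lam i → 1 ≤ k → 1 ≤ l → l ≤ nu k →
      1 - (u1 * q1 ^ (i - 1) * q2 ^ (j - 1)) / (u2 * q1 ^ (k - 1) * q2 ^ (l - 1)) ≠ 0 ∧
      1 - q1 * q2 * (u1 * q1 ^ (i - 1) * q2 ^ (j - 1))
            / (u2 * q1 ^ (k - 1) * q2 ^ (l - 1)) ≠ 0) :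
    nek (u1 / u2) q1 q2 Nl Nn lam nu
      = (∏ i ∈ Finset.Icc 1 Nl, ∏ j ∈ Finset.Icc 1 (lam i),
          ∏ k ∈ Finset.Icc 1 Nn, ∏ l ∈ Finset.Icc 1 (nu k),
            S ((u1 * q1 ^ (i - 1) * q2 ^ (j - 1)) / (u2 * q1 ^ (k - 1) * q2 ^ (l - 1))))
        * (∏ i ∈ Finset.Icc 1 Nl, ∏ j ∈ Finset.Icc 1 (lam i),
            (1 - q1 * q2 * (u1 * q1 ^ (i - 1) * q2 ^ (j - 1)) / u2))
        * (∏ k ∈ Finset.Icc 1 Nn, ∏ l ∈ Finset.Icc 1 (nu k),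
            (1 - u1 / (u2 * q1 ^ (k - 1) * q2 ^ (l - 1)))) := by
  classical
  set t : ℂ := u1 / u2 with htdef
  have chi : ∀ i j k l : ℕ, 1 ≤ i → 1 ≤ j → 1 ≤ k → 1 ≤ l →
      (u1 * q1 ^ (i - 1) * q2 ^ (j - 1)) / (u2 * q1 ^ (k - 1) * q2 ^ (l - 1))
        = t * q1 ^ ((i : ℤ) - k) * q2 ^ ((j : ℤ) - l) := by
    intro i j k l hi hj hk hl
    have e1 : q1 ^ ((i : ℤ) - k) = q1 ^ (((i - 1 : ℕ)) : ℤ) / q1 ^ (((k - 1 : ℕ)) : ℤ) := by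
      rw [← zpow_sub₀ hq1]
      congr 1
      omega
    have e2 : q2 ^ ((j : ℤ) - l) = q2 ^ (((j - 1 : ℕ)) : ℤ) / q2 ^ (((l - 1 : ℕ)) : ℤ) := by
      rw [← zpow_sub₀ hq2]
      congr 1
      omega
    rw [e1, e2, zpow_natCast, zpow_natCast, zpow_natCast, zpow_natCast, htdef]
    have h1 : q1 ^ (k - 1 : ℕ) ≠ 0 := pow_ne_zero _ hq1
    have h2 : q2 ^ (l - 1 : ℕ) ≠ 0 := pow_ne_zero _ hq2
    field_simp
  have TT10e : ∀ a b : ℤ, 1 - q1 * (t * q1 ^ a * q2 ^ b) = TT t q1 q2 (a + 1, b) := by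
    intro a b; simp only [TT]; rw [zpow_add_one₀ hq1]; ring
  have TT01e : ∀ a b : ℤ, 1 - q2 * (t * q1 ^ a * q2 ^ b) = TT t q1 q2 (a, b + 1) := by
    intro a b; simp only [TT]; rw [zpow_add_one₀ hq2]; ring
  have TT11e : ∀ a b : ℤ, 1 - q1 * q2 * (t * q1 ^ a * q2 ^ b) = TT t q1 q2 (a + 1, b + 1) := by
    intro a b; simp only [TT]; rw [zpow_add_one₀ hq1, zpow_add_one₀ hq2]; ring
  have hd : ∀ i j k l : ℕ, i ∈ Icc 1 Nl → j ∈ Icc 1 (lam i) → k ∈ Icc 1 Nn → l ∈ Icc 1 (nu k) →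
      TT t q1 q2 ((i : ℤ) - k, (j : ℤ) - l) ≠ 0
        ∧ TT t q1 q2 ((i : ℤ) - k + 1, (j : ℤ) - l + 1) ≠ 0 := by
    intro i j k l hi hj hk hl
    simp only [mem_Icc] at hi hj hk hl
    obtain ⟨hg1, hg2⟩ := hgen i j k l hi.1 hj.1 hj.2 hk.1 hl.1 hl.2
    rw [chi i j k l hi.1 hj.1 hk.1 hl.1] at hg1
    constructor
    · simpa only [TT] using hg1
    · have hrw : 1 - q1 * q2 * (u1 * q1 ^ (i - 1) * q2 ^ (j - 1))
            / (u2 * q1 ^ (k - 1) * q2 ^ (l - 1))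
          = TT t q1 q2 ((i : ℤ) - k + 1, (j : ℤ) - l + 1) := by
        rw [mul_div_assoc, chi i j k l hi.1 hj.1 hk.1 hl.1, TT11e]
      rw [hrw] at hg2
      exact hg2
  have hP00 : (∏ i ∈ Icc 1 Nl, ∏ j ∈ Icc 1 (lam i), ∏ k ∈ Icc 1 Nn, ∏ l ∈ Icc 1 (nu k),
      TT t q1 q2 ((i : ℤ) - k, (j : ℤ) - l)) ≠ 0 := by
    rw [Finset.prod_ne_zero_iff]; intro i hi
    rw [Finset.prod_ne_zero_iff]; intro j hj
    rw [Finset.prod_ne_zero_iff]; intro k hk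
    rw [Finset.prod_ne_zero_iff]; intro l hl
    exact (hd i j k l hi hj hk hl).1
  have hP11 : (∏ i ∈ Icc 1 Nl, ∏ j ∈ Icc 1 (lam i), ∏ k ∈ Icc 1 Nn, ∏ l ∈ Icc 1 (nu k),
      TT t q1 q2 ((i : ℤ) - k + 1, (j : ℤ) - l + 1)) ≠ 0 := by
    rw [Finset.prod_ne_zero_iff]; intro i hi
    rw [Finset.prod_ne_zero_iff]; intro j hj
    rw [Finset.prod_ne_zero_iff]; intro k hk
    rw [Finset.prod_ne_zero_iff]; intro l hl
    exact (hd i j k l hi hj hk hl).2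
  -- merge helper for quadruple products
  have merge : ∀ (F G : ℕ → ℕ → ℕ → ℕ → ℂ),
      (∏ i ∈ Icc 1 Nl, ∏ j ∈ Icc 1 (lam i), ∏ k ∈ Icc 1 Nn, ∏ l ∈ Icc 1 (nu k), F i j k l)
        * (∏ i ∈ Icc 1 Nl, ∏ j ∈ Icc 1 (lam i), ∏ k ∈ Icc 1 Nn, ∏ l ∈ Icc 1 (nu k), G i j k l)
      = ∏ i ∈ Icc 1 Nl, ∏ j ∈ Icc 1 (lam i), ∏ k ∈ Icc 1 Nn, ∏ l ∈ Icc 1 (nu k),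
          (F i j k l * G i j k l) := by
    intro F G
    rw [← Finset.prod_mul_distrib]
    apply Finset.prod_congr rfl; intro i _
    rw [← Finset.prod_mul_distrib]
    apply Finset.prod_congr rfl; intro j _
    rw [← Finset.prod_mul_distrib]
    apply Finset.prod_congr rfl; intro k _
    rw [← Finset.prod_mul_distrib]
  -- the S-product times denominators
  have eSmerge : (∏ i ∈ Icc 1 Nl, ∏ j ∈ Icc 1 (lam i), ∏ k ∈ Icc 1 Nn, ∏ l ∈ Icc 1 (nu k),
        S ((u1 * q1 ^ (i - 1) * q2 ^ (j - 1)) / (u2 * q1 ^ (k - 1) * q2 ^ (l - 1))))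
      * ((∏ i ∈ Icc 1 Nl, ∏ j ∈ Icc 1 (lam i), ∏ k ∈ Icc 1 Nn, ∏ l ∈ Icc 1 (nu k),
            TT t q1 q2 ((i : ℤ) - k, (j : ℤ) - l))
        * (∏ i ∈ Icc 1 Nl, ∏ j ∈ Icc 1 (lam i), ∏ k ∈ Icc 1 Nn, ∏ l ∈ Icc 1 (nu k),
            TT t q1 q2 ((i : ℤ) - k + 1, (j : ℤ) - l + 1)))
      = (∏ i ∈ Icc 1 Nl, ∏ j ∈ Icc 1 (lam i), ∏ k ∈ Icc 1 Nn, ∏ l ∈ Icc 1 (nu k),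
            TT t q1 q2 ((i : ℤ) - k + 1, (j : ℤ) - l))
        * (∏ i ∈ Icc 1 Nl, ∏ j ∈ Icc 1 (lam i), ∏ k ∈ Icc 1 Nn, ∏ l ∈ Icc 1 (nu k),
            TT t q1 q2 ((i : ℤ) - k, (j : ℤ) - l + 1)) := by
    rw [merge, merge, merge]
    apply Finset.prod_congr rfl; intro i hi
    apply Finset.prod_congr rfl; intro j hj
    apply Finset.prod_congr rfl; intro k hk
    apply Finset.prod_congr rfl; intro l hl
    have hmem := hd i j k l hi hj hk hl
    simp only [mem_Icc] at hi hj hk hl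
    rw [hS, chi i j k l hi.1 hj.1 hk.1 hl.1, TT10e, TT01e, TT11e,
        show (1 - t * q1 ^ ((i : ℤ) - k) * q2 ^ ((j : ℤ) - l))
            = TT t q1 q2 ((i : ℤ) - k, (j : ℤ) - l) from rfl]
    exact div_mul_cancel₀ _ (mul_ne_zero hmem.1 hmem.2)
  -- A and B products
  have eA : (∏ i ∈ Icc 1 Nl, ∏ j ∈ Icc 1 (lam i),
        (1 - q1 * q2 * (u1 * q1 ^ (i - 1) * q2 ^ (j - 1)) / u2))
      = ∏ i ∈ Icc 1 Nl, ∏ j ∈ Icc 1 (lam i), TT t q1 q2 ((i : ℤ), (j : ℤ)) := by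
    apply Finset.prod_congr rfl; intro i hi
    apply Finset.prod_congr rfl; intro j hj
    simp only [mem_Icc] at hi hj
    simp only [TT]
    rw [show ((i : ℤ)) = ((i - 1 : ℕ) : ℤ) + 1 from by omega,
        show ((j : ℤ)) = ((j - 1 : ℕ) : ℤ) + 1 from by omega,
        zpow_add_one₀ hq1, zpow_add_one₀ hq2, zpow_natCast, zpow_natCast, htdef]
    field_simp
  have eB : (∏ k ∈ Icc 1 Nn, ∏ l ∈ Icc 1 (nu k),
        (1 - u1 / (u2 * q1 ^ (k - 1) * q2 ^ (l - 1))))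
      = ∏ k ∈ Icc 1 Nn, ∏ l ∈ Icc 1 (nu k), TT t q1 q2 (1 - (k : ℤ), 1 - (l : ℤ)) := by
    apply Finset.prod_congr rfl; intro k hk
    apply Finset.prod_congr rfl; intro l hl
    simp only [mem_Icc] at hk hl
    simp only [TT]
    rw [show (1 - (k : ℤ)) = -((k - 1 : ℕ) : ℤ) from by omega,
        show (1 - (l : ℤ)) = -((l - 1 : ℕ) : ℤ) from by omega,
        zpow_neg, zpow_neg, zpow_natCast, zpow_natCast, htdef]
    have h1 : q1 ^ (k - 1 : ℕ) ≠ 0 := pow_ne_zero _ hq1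
    have h2 : q2 ^ (l - 1 : ℕ) ≠ 0 := pow_ne_zero _ hq2
    field_simp
  -- nek in TT form
  have enek : nek t q1 q2 Nl Nn lam nu
      = (∏ i ∈ Icc 1 Nl, ∏ j ∈ Icc 1 (lam i),
          TT t q1 q2 ((transposeFn Nl lam j : ℤ) - i + 1, (j : ℤ) - nu i))
        * (∏ k ∈ Icc 1 Nn, ∏ l ∈ Icc 1 (nu k),
          TT t q1 q2 ((k : ℤ) - transposeFn Nn nu l, (lam k : ℤ) - l + 1)) := by
    unfold nek
    congr 1
    · apply Finset.prod_congr rfl; intro i _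
      apply Finset.prod_congr rfl; intro j _
      simp only [TT]
      ring
    · apply Finset.prod_congr rfl; intro k _
      apply Finset.prod_congr rfl; intro l _
      simp only [TT]
      ring
  rw [eA, eB, enek]
  have hKC := keyC t q1 q2 Nl Nn lam nu hlam hNl hnu hNn
  apply mul_right_cancel₀ (mul_ne_zero hP00 hP11)
  calc (∏ i ∈ Icc 1 Nl, ∏ j ∈ Icc 1 (lam i),
          TT t q1 q2 ((transposeFn Nl lam j : ℤ) - i + 1, (j : ℤ) - nu i))
        * (∏ k ∈ Icc 1 Nn, ∏ l ∈ Icc 1 (nu k),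
          TT t q1 q2 ((k : ℤ) - transposeFn Nn nu l, (lam k : ℤ) - l + 1))
        * ((∏ i ∈ Icc 1 Nl, ∏ j ∈ Icc 1 (lam i), ∏ k ∈ Icc 1 Nn, ∏ l ∈ Icc 1 (nu k),
            TT t q1 q2 ((i : ℤ) - k, (j : ℤ) - l))
          * (∏ i ∈ Icc 1 Nl, ∏ j ∈ Icc 1 (lam i), ∏ k ∈ Icc 1 Nn, ∏ l ∈ Icc 1 (nu k),
            TT t q1 q2 ((i : ℤ) - k + 1, (j : ℤ) - l + 1)))
      = (∏ i ∈ Icc 1 Nl, ∏ j ∈ Icc 1 (lam i),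
          TT t q1 q2 ((transposeFn Nl lam j : ℤ) - i + 1, (j : ℤ) - nu i))
        * (∏ k ∈ Icc 1 Nn, ∏ l ∈ Icc 1 (nu k),
          TT t q1 q2 ((k : ℤ) - transposeFn Nn nu l, (lam k : ℤ) - l + 1))
        * (∏ i ∈ Icc 1 Nl, ∏ j ∈ Icc 1 (lam i), ∏ k ∈ Icc 1 Nn, ∏ l ∈ Icc 1 (nu k),
            TT t q1 q2 ((i : ℤ) - k, (j : ℤ) - l))
        * (∏ i ∈ Icc 1 Nl, ∏ j ∈ Icc 1 (lam i), ∏ k ∈ Icc 1 Nn, ∏ l ∈ Icc 1 (nu k),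
            TT t q1 q2 ((i : ℤ) - k + 1, (j : ℤ) - l + 1)) := by ring
    _ = (∏ i ∈ Icc 1 Nl, ∏ j ∈ Icc 1 (lam i), ∏ k ∈ Icc 1 Nn, ∏ l ∈ Icc 1 (nu k),
            TT t q1 q2 ((i : ℤ) - k + 1, (j : ℤ) - l))
        * (∏ i ∈ Icc 1 Nl, ∏ j ∈ Icc 1 (lam i), ∏ k ∈ Icc 1 Nn, ∏ l ∈ Icc 1 (nu k),
            TT t q1 q2 ((i : ℤ) - k, (j : ℤ) - l + 1))
        * (∏ i ∈ Icc 1 Nl, ∏ j ∈ Icc 1 (lam i), TT t q1 q2 ((i : ℤ), (j : ℤ)))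
        * (∏ k ∈ Icc 1 Nn, ∏ l ∈ Icc 1 (nu k), TT t q1 q2 (1 - (k : ℤ), 1 - (l : ℤ))) := hKC
    _ = ((∏ i ∈ Icc 1 Nl, ∏ j ∈ Icc 1 (lam i), ∏ k ∈ Icc 1 Nn, ∏ l ∈ Icc 1 (nu k),
            S ((u1 * q1 ^ (i - 1) * q2 ^ (j - 1)) / (u2 * q1 ^ (k - 1) * q2 ^ (l - 1))))
          * ((∏ i ∈ Icc 1 Nl, ∏ j ∈ Icc 1 (lam i), ∏ k ∈ Icc 1 Nn, ∏ l ∈ Icc 1 (nu k),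
              TT t q1 q2 ((i : ℤ) - k, (j : ℤ) - l))
            * (∏ i ∈ Icc 1 Nl, ∏ j ∈ Icc 1 (lam i), ∏ k ∈ Icc 1 Nn, ∏ l ∈ Icc 1 (nu k),
              TT t q1 q2 ((i : ℤ) - k + 1, (j : ℤ) - l + 1))))
        * (∏ i ∈ Icc 1 Nl, ∏ j ∈ Icc 1 (lam i), TT t q1 q2 ((i : ℤ), (j : ℤ)))
        * (∏ k ∈ Icc 1 Nn, ∏ l ∈ Icc 1 (nu k), TT t q1 q2 (1 - (k : ℤ), 1 - (l : ℤ))) := by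
          rw [eSmerge]
    _ = (∏ i ∈ Icc 1 Nl, ∏ j ∈ Icc 1 (lam i), ∏ k ∈ Icc 1 Nn, ∏ l ∈ Icc 1 (nu k),
            S ((u1 * q1 ^ (i - 1) * q2 ^ (j - 1)) / (u2 * q1 ^ (k - 1) * q2 ^ (l - 1))))
        * (∏ i ∈ Icc 1 Nl, ∏ j ∈ Icc 1 (lam i), TT t q1 q2 ((i : ℤ), (j : ℤ)))
        * (∏ k ∈ Icc 1 Nn, ∏ l ∈ Icc 1 (nu k), TT t q1 q2 (1 - (k : ℤ), 1 - (l : ℤ)))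
        * ((∏ i ∈ Icc 1 Nl, ∏ j ∈ Icc 1 (lam i), ∏ k ∈ Icc 1 Nn, ∏ l ∈ Icc 1 (nu k),
            TT t q1 q2 ((i : ℤ) - k, (j : ℤ) - l))
          * (∏ i ∈ Icc 1 Nl, ∏ j ∈ Icc 1 (lam i), ∏ k ∈ Icc 1 Nn, ∏ l ∈ Icc 1 (nu k),
            TT t q1 q2 ((i : ℤ) - k + 1, (j : ℤ) - l + 1))) := by ring
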